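/- Let 0 < α < 2 and h > 0. Then the family of linear-interpolation weights is summable and Σ_{j∈ℤ, j≠0} w_j^T = 2^α · Γ((α+1)/2) / (√π · Γ(2 − α/2)) · h^{−α}. -/

import Mathlib

open Real

/-- The normalizing constant `C_{1,α}` of the one-dimensional fractional Laplacian. -/
noncomputable def Cna (α : ℝ) : ℝ :=
  α * 2 ^ (α - 1) * Real.Gamma ((α + 1) / 2) / (Real.sqrt Real.pi * Real.Gamma ((2 - α) / 2))

/-- The antiderivative `F` with `F''(t) = C_{1,α} t^{−1−α}` for `t > 0`. -/
noncomputable def Ffun (α t : ℝ) : ℝ :=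
  if α = 1 then -(Cna 1) * Real.log t else Cna α * t ^ (1 - α) / ((α - 1) * α)

/-- The derivative `F'` of `Ffun`: `F'(t) = −C_{1,α} t^{−α}/α` for `t > 0`
(valid in both cases `α ≠ 1` and `α = 1`). -/
noncomputable def Fd (α t : ℝ) : ℝ := -(Cna α) * t ^ (-α) / α

/-- The linear-interpolation weights `w_j^T` (with the irrelevant `w_0` set to `0`). -/
noncomputable def wT (α h : ℝ) (j : ℤ) : ℝ :=
  if j = 0 then 0
  else if j.natAbs = 1 then
    h ^ (-α) * (Cna α / (2 - α) - Fd α 1 + Ffun α 2 - Ffun α 1)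
  else
    h ^ (-α) * (Ffun α ((j.natAbs : ℝ) + 1) - 2 * Ffun α (j.natAbs : ℝ)
      + Ffun α ((j.natAbs : ℝ) - 1))

lemma Cna_pos {α : ℝ} (hα0 : 0 < α) (hα2 : α < 2) : 0 < Cna α := by
  have h1 : 0 < Real.Gamma ((α + 1) / 2) := Real.Gamma_pos_of_pos (by linarith)
  have h2 : 0 < Real.Gamma ((2 - α) / 2) := Real.Gamma_pos_of_pos (by linarith)
  have h3 : 0 < Real.sqrt Real.pi := Real.sqrt_pos.2 Real.pi_pos
  have h4 : (0:ℝ) < 2 ^ (α - 1) := Real.rpow_pos_of_pos two_pos _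
  unfold Cna
  positivity

lemma Ffun_hasDeriv {α : ℝ} (hα0 : 0 < α) {t : ℝ} (ht : 0 < t) :
    HasDerivAt (Ffun α) (Fd α t) t := by
  by_cases hα : α = 1
  · subst hα
    have h1 : HasDerivAt (fun s : ℝ => -(Cna 1) * Real.log s) (-(Cna 1) * t⁻¹) t :=
      (Real.hasDerivAt_log ht.ne').const_mul _
    have hF : Ffun 1 = fun s : ℝ => -(Cna 1) * Real.log s := by
      funext s; simp [Ffun]
    rw [hF]
    convert h1 using 1
    rw [Fd, Real.rpow_neg_one]
    ring
  · have hα1 : α - 1 ≠ 0 := sub_ne_zero.2 hα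
    have h1 : HasDerivAt (fun s : ℝ => s ^ (1 - α)) ((1 - α) * t ^ (1 - α - 1)) t :=
      Real.hasDerivAt_rpow_const (Or.inl ht.ne')
    have h2 := (h1.const_mul (Cna α)).div_const ((α - 1) * α)
    have hF : Ffun α = fun s : ℝ => Cna α * s ^ (1 - α) / ((α - 1) * α) := by
      funext s; simp [Ffun, hα]
    rw [hF]
    convert h2 using 1
    · rfl
    · rfl
    have he : 1 - α - 1 = -α := by ring
    rw [he, Fd]
    field_simp
    ring

lemma Fd_lt {α : ℝ} (hα0 : 0 < α) (hα2 : α < 2) {a b : ℝ} (ha : 0 < a) (hab : a < b) :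
    Fd α a < Fd α b := by
  have hC := Cna_pos hα0 hα2
  have h := Real.rpow_lt_rpow_of_neg ha hab (neg_neg_of_pos hα0)
  unfold Fd
  rw [div_lt_div_iff₀ hα0 hα0]
  nlinarith [mul_pos hC hα0]

lemma Fd_neg {α : ℝ} (hα0 : 0 < α) (hα2 : α < 2) {t : ℝ} (ht : 0 < t) : Fd α t < 0 := by
  have hC := Cna_pos hα0 hα2
  have h : 0 < Cna α * t ^ (-α) := mul_pos hC (Real.rpow_pos_of_pos ht _)
  unfold Fd
  rw [neg_mul]
  exact div_neg_of_neg_of_pos (neg_neg_iff_pos.2 h) hα0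

lemma mvt_step {α : ℝ} (hα0 : 0 < α) {x : ℝ} (hx : 0 < x) :
    ∃ c ∈ Set.Ioo x (x + 1), Ffun α (x + 1) - Ffun α x = Fd α c := by
  have hlt : x < x + 1 := by linarith
  obtain ⟨c, hc, hceq⟩ := exists_hasDerivAt_eq_slope (Ffun α) (Fd α) hlt
    (fun y hy => (Ffun_hasDeriv hα0 (lt_of_lt_of_le hx hy.1)).continuousAt.continuousWithinAt)
    (fun y hy => Ffun_hasDeriv hα0 (hx.trans hy.1))
  refine ⟨c, hc, ?_⟩
  rw [hceq]
  norm_num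

lemma wT_neg (α h : ℝ) (j : ℤ) : wT α h (-j) = wT α h j := by
  simp only [wT, Int.natAbs_neg, neg_eq_zero]

theorem wT_sum (α : ℝ) (hα0 : 0 < α) (hα2 : α < 2) (h : ℝ) (hh : 0 < h) :
    Summable (fun j : {j : ℤ // j ≠ 0} => wT α h (j : ℤ)) ∧
    ∑' j : {j : ℤ // j ≠ 0}, wT α h (j : ℤ)
      = 2 ^ α * Real.Gamma ((α + 1) / 2) / (Real.sqrt Real.pi * Real.Gamma (2 - α / 2)) * h ^ (-α) := by
  have hC := Cna_pos hα0 hα2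
  have hX : (0:ℝ) < h ^ (-α) := Real.rpow_pos_of_pos hh _
  -- the telescoping sequence
  set u : ℕ → ℝ := fun n => Ffun α ((n : ℝ) + 2) - Ffun α ((n : ℝ) + 1) with hu
  -- mean value points
  have hc : ∀ n : ℕ, ∃ c ∈ Set.Ioo ((n : ℝ) + 1) ((n : ℝ) + 2), u n = Fd α c := by
    intro n
    obtain ⟨c, hc1, hc2⟩ := mvt_step hα0 (show (0:ℝ) < (n : ℝ) + 1 by positivity)
    refine ⟨c, ?_, ?_⟩
    · convert hc1 using 2 <;> ring
    · rw [hu]; simp only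
      rw [show (n : ℝ) + 2 = (n : ℝ) + 1 + 1 by ring]
      exact hc2
  choose c hcmem hceq using hc
  have hcpos : ∀ n : ℕ, (0:ℝ) < c n := fun n =>
    lt_of_le_of_lt (by positivity) (hcmem n).1
  -- u is negative and increasing
  have hu_neg : ∀ n : ℕ, u n < 0 := fun n => (hceq n) ▸ Fd_neg hα0 hα2 (hcpos n)
  have hu_mono : ∀ n : ℕ, u n ≤ u (n + 1) := by
    intro n
    have h1 : c n < c (n + 1) := by
      have := (hcmem n).2
      have := (hcmem (n + 1)).1
      push_cast at *
      linarith
    rw [hceq n, hceq (n + 1)]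
    exact (Fd_lt hα0 hα2 (hcpos n) h1).le
  -- u tends to 0
  have hu_tendsto : Filter.Tendsto u Filter.atTop (nhds 0) := by
    have hlow : Filter.Tendsto (fun n : ℕ => Fd α ((n : ℝ) + 1)) Filter.atTop (nhds 0) := by
      have h1 : Filter.Tendsto (fun n : ℕ => (n : ℝ) + 1) Filter.atTop Filter.atTop :=
        Filter.tendsto_atTop_add_const_right _ 1 tendsto_natCast_atTop_atTop
      have h2 : Filter.Tendsto (fun n : ℕ => ((n : ℝ) + 1) ^ (-α)) Filter.atTop (nhds 0) :=
        (tendsto_rpow_neg_atTop hα0).comp h1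
      have h3 := (h2.const_mul (-(Cna α))).div_const α
      simpa [Fd, neg_mul] using h3
    apply tendsto_of_tendsto_of_tendsto_of_le_of_le hlow tendsto_const_nhds
    · intro n
      rw [hceq n]
      exact (Fd_lt hα0 hα2 (by positivity) (hcmem n).1).le
    · intro n
      exact (hu_neg n).le
  -- the shifted weights
  have hv_eq : ∀ n : ℕ, wT α h ((n : ℤ) + 2) = h ^ (-α) * (u (n + 1) - u n) := by
    intro n
    have hne : ((n : ℤ) + 2) ≠ 0 := by omega
    have habs : ((n : ℤ) + 2).natAbs = n + 2 := by omega
    rw [wT, if_neg hne, habs]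
    have h1 : ((n + 2 : ℕ) : ℝ) = (n : ℝ) + 2 := by push_cast; ring
    rw [if_neg (by omega), h1, hu]
    simp only
    push_cast
    ring_nf
  -- sum of the shifted weights
  have hv_hasSum : HasSum (fun n : ℕ => wT α h ((n : ℤ) + 2)) (h ^ (-α) * (0 - u 0)) := by
    have hnn : ∀ n : ℕ, 0 ≤ wT α h ((n : ℤ) + 2) := by
      intro n
      rw [hv_eq n]
      have := hu_mono n
      nlinarith
    rw [hasSum_iff_tendsto_nat_of_nonneg hnn]
    have hps : ∀ N : ℕ, ∑ i ∈ Finset.range N, wT α h ((i : ℤ) + 2)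
        = h ^ (-α) * (u N - u 0) := by
      intro N
      rw [← Finset.sum_range_sub u N, Finset.mul_sum]
      exact Finset.sum_congr rfl fun i _ => hv_eq i
    simp only [hps]
    exact ((hu_tendsto.sub_const (u 0)).const_mul _)
  -- w_1
  have hw1 : wT α h 1 = h ^ (-α) * ((Cna α / (2 - α) - Fd α 1) + u 0) := by
    rw [wT, if_neg one_ne_zero, if_pos (by norm_num : (1:ℤ).natAbs = 1)]
    have h0 : u 0 = Ffun α 2 - Ffun α 1 := by rw [hu]; norm_num
    rw [h0]
    ring
  set S : ℝ := h ^ (-α) * (Cna α / (2 - α) - Fd α 1) with hS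
  -- sum over ℕ
  have hnat : HasSum (fun n : ℕ => wT α h (n : ℤ)) S := by
    have h2 : HasSum (fun n : ℕ => wT α h (((n + 2 : ℕ)) : ℤ)) (h ^ (-α) * (0 - u 0)) := by
      have he : (fun n : ℕ => wT α h (((n + 2 : ℕ)) : ℤ)) = fun n : ℕ => wT α h ((n : ℤ) + 2) := by
        funext n; congr 1 <;> omega
      rw [he]; exact hv_hasSum
    have h3 := (hasSum_nat_add_iff (f := fun n : ℕ => wT α h (n : ℤ)) 2).mp h2
    have h4 : h ^ (-α) * (0 - u 0) + ∑ i ∈ Finset.range 2, wT α h (i : ℤ) = S := by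
      rw [Finset.sum_range_succ, Finset.sum_range_one]
      have h0 : wT α h ((0 : ℕ) : ℤ) = 0 := by simp [wT]
      have h1' : wT α h ((1 : ℕ) : ℤ) = wT α h 1 := by norm_num
      rw [h0, h1', hw1, hS]; ring
    rwa [h4] at h3
  -- sum over negative integers
  have hneg : HasSum (fun n : ℕ => wT α h (-((n : ℤ) + 1))) S := by
    have h1 : HasSum (fun n : ℕ => wT α h (((n + 1 : ℕ)) : ℤ)) S := by
      apply (hasSum_nat_add_iff (f := fun n : ℕ => wT α h (n : ℤ)) 1).mpr
      have h0 : wT α h ((0 : ℕ) : ℤ) = 0 := by simp [wT]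
      rw [Finset.sum_range_one, h0, add_zero]
      exact hnat
    have he : (fun n : ℕ => wT α h (-((n : ℤ) + 1))) = fun n : ℕ => wT α h (((n + 1 : ℕ)) : ℤ) := by
      funext n
      rw [show -((n : ℤ) + 1) = -(((n + 1 : ℕ) : ℤ)) by omega, wT_neg]
    rw [he]; exact h1
  -- sum over ℤ
  have hint : HasSum (wT α h) (S + S) := HasSum.of_nat_of_neg_add_one hnat hneg
  -- restrict to the subtype
  have hsupp : Function.support (wT α h) ⊆ {j : ℤ | j ≠ 0} := by
    intro j hj
    simp only [Function.mem_support] at hj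
    intro hj0
    exact hj (by simp [wT, hj0])
  have hsub : HasSum (fun j : {j : ℤ // j ≠ 0} => wT α h (j : ℤ)) (S + S) :=
    (hasSum_subtype_iff_of_support_subset hsupp).mpr hint
  refine ⟨hsub.summable, ?_⟩
  rw [hsub.tsum_eq, hS]
  -- evaluate the constant
  have hΓa : 0 < Real.Gamma ((α + 1) / 2) := Real.Gamma_pos_of_pos (by linarith)
  have hΓb : 0 < Real.Gamma ((2 - α) / 2) := Real.Gamma_pos_of_pos (by linarith)
  have hπ : 0 < Real.sqrt Real.pi := Real.sqrt_pos.2 Real.pi_pos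
  have hG : Real.Gamma (2 - α / 2) = ((2 - α) / 2) * Real.Gamma ((2 - α) / 2) := by
    rw [show (2 - α / 2 : ℝ) = (2 - α) / 2 + 1 by ring]
    exact Real.Gamma_add_one (by intro hz; rw [div_eq_zero_iff] at hz; rcases hz with hz | hz <;> linarith)
  have h2α : (2:ℝ) ^ α = 2 * 2 ^ (α - 1) := by
    rw [show α = α - 1 + 1 by ring]
    rw [Real.rpow_add two_pos, Real.rpow_one]
    ring_nf
  have hFd1 : Fd α 1 = -(Cna α) / α := by
    rw [Fd, Real.one_rpow]
    ring
  rw [hFd1, hG, h2α, Cna]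
  have hα2' : (2:ℝ) - α ≠ 0 := by linarith
  have hα0' : α ≠ 0 := hα0.ne'
  field_simp
  ring
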